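/- arXiv:1602.07205 — 5 statements merged into one kernel-verified Lean document; each statement's English description precedes it below -/
import Mathlib

section
/- Let 0 < α < 1, let t > 0, and let h : [0, t] → ℝ be continuously differentiable. Then (1/Γ(1-α)) ∫₀^t (t-τ)^{-α} h'(τ) dτ = ∫₀^∞ φ(t, θ) dθ, where φ(t, θ) = (2 sin(πα)/π) θ^{2α-1} ∫₀^t h'(τ) e^{-(t-τ) θ²} dτ. -/
open Real Set intervalIntegral MeasureTheory

/-- The Gaussian moment integral: for `b > 0` and `α > 0`,
`∫₀^∞ θ^(2α-1) exp(-b θ²) dθ = (1/b)^α Γ(α) / 2`. -/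
lemma caputo_gauss_moment (α : ℝ) (hα0 : 0 < α) {b : ℝ} (hb : 0 < b) :
    ∫ θ in Ioi (0:ℝ), θ ^ (2*α - 1) * Real.exp (-b * θ^2)
      = (1/b) ^ α * Real.Gamma α / 2 := by
  have h1 : (∫ x in Ioi (0:ℝ),
        ((2:ℝ) * x ^ ((2:ℝ)-1)) • ((fun u : ℝ => u ^ (α-1) * Real.exp (-(b*u))) (x ^ (2:ℝ))))
      = ∫ u in Ioi (0:ℝ), u ^ (α-1) * Real.exp (-(b*u)) :=
    integral_comp_rpow_Ioi_of_pos (g := fun u : ℝ => u ^ (α-1) * Real.exp (-(b*u)))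
      (p := 2) (by norm_num)
  rw [integral_rpow_mul_exp_neg_mul_Ioi hα0 hb] at h1
  have h2 : ∀ x ∈ Ioi (0:ℝ),
      ((2:ℝ) * x ^ ((2:ℝ)-1)) • ((fun u : ℝ => u ^ (α-1) * Real.exp (-(b*u))) (x ^ (2:ℝ)))
      = 2 * (x ^ (2*α - 1) * Real.exp (-b * x^2)) := by
    intro x hx
    have hx0 : (0:ℝ) < x := hx
    have hsq : x ^ (2:ℝ) = x ^ 2 := by
      rw [show (2:ℝ) = ((2:ℕ):ℝ) by norm_num, Real.rpow_natCast]
    have e1 : x ^ ((2:ℝ)-1) = x := by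
      norm_num
    have e2 : (x ^ (2:ℝ)) ^ (α-1) = x ^ (2*(α-1)) := (Real.rpow_mul hx0.le 2 (α-1)).symm
    have e3 : x ^ (2*α-1) = x * x ^ (2*(α-1)) := by
      rw [show 2*α-1 = 1 + 2*(α-1) by ring, Real.rpow_add hx0, Real.rpow_one]
    simp only [smul_eq_mul]
    rw [e1, e2, hsq, e3, neg_mul]
    ring
  rw [setIntegral_congr_fun measurableSet_Ioi h2, MeasureTheory.integral_const_mul] at h1
  linarith

/-- Diffusive representation of the Caputo fractional derivative: for `0 < α < 1`,
`t > 0` and `h` continuously differentiable on `[0, t]` with derivative `h'`,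
`(1/Γ(1-α)) ∫₀^t (t-τ)^(-α) h'(τ) dτ = ∫₀^∞ φ(t,θ) dθ`, where
`φ(t,θ) = (2 sin(πα)/π) θ^(2α-1) ∫₀^t h'(τ) exp(-(t-τ)θ²) dτ`. -/
theorem caputo_diffusive_representation (α t : ℝ) (hα0 : 0 < α) (hα1 : α < 1) (ht : 0 < t)
    (h h' : ℝ → ℝ)
    (hderiv : ∀ τ ∈ Set.Icc (0 : ℝ) t, HasDerivWithinAt h (h' τ) (Set.Icc 0 t) τ)
    (hcont : ContinuousOn h' (Set.Icc 0 t)) :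
    (1 / Real.Gamma (1 - α)) * ∫ τ in (0 : ℝ)..t, (t - τ) ^ (-α) * h' τ =
      ∫ θ in Set.Ioi (0 : ℝ),
        (2 * Real.sin (Real.pi * α) / Real.pi) * θ ^ (2 * α - 1) *
          ∫ τ in (0 : ℝ)..t, h' τ * Real.exp (-(t - τ) * θ ^ 2) := by
  set c : ℝ := 2 * Real.sin (Real.pi * α) / Real.pi with hc
  -- constants
  have hsin : 0 < Real.sin (Real.pi * α) :=
    Real.sin_pos_of_pos_of_lt_pi (by positivity)
      (by nlinarith [Real.pi_pos])
  have hΓ1 : 0 < Real.Gamma (1 - α) := Real.Gamma_pos_of_pos (by linarith)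
  have hΓα : 0 < Real.Gamma α := Real.Gamma_pos_of_pos hα0
  have hrefl : Real.Gamma α * Real.Gamma (1-α) = Real.pi / Real.sin (Real.pi * α) :=
    Real.Gamma_mul_Gamma_one_sub α
  have hkey : c * Real.Gamma α / 2 = 1 / Real.Gamma (1-α) := by
    have hπ : (0:ℝ) < Real.pi := Real.pi_pos
    have h1 : Real.Gamma α * Real.Gamma (1-α) * Real.sin (Real.pi * α) = Real.pi := by
      rw [hrefl]; field_simp
    rw [hc]
    field_simp
    linarith [h1]
  -- clamped continuous version of h'
  obtain ⟨M, hM⟩ : ∃ M, ∀ y ∈ Icc (0:ℝ) t, ‖h' y‖ ≤ M :=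
    isCompact_Icc.exists_bound_of_continuousOn hcont
  set H : ℝ → ℝ := fun τ => h' (max 0 (min t τ)) with hHdef
  have hmem : ∀ x : ℝ, max 0 (min t x) ∈ Icc (0:ℝ) t := fun x =>
    ⟨le_max_left _ _, max_le ht.le (min_le_left _ _)⟩
  have hHcont : Continuous H :=
    hcont.comp_continuous (continuous_const.max (continuous_const.min continuous_id)) hmem
  have hHeq : ∀ τ ∈ Icc (0:ℝ) t, H τ = h' τ := by
    intro τ hτ
    have : max 0 (min t τ) = τ := by
      rw [min_eq_right hτ.2, max_eq_right hτ.1]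
    simp only [hHdef, this]
  have hHbd : ∀ x, ‖H x‖ ≤ M := fun x => hM _ (hmem x)
  have hM0 : 0 ≤ M := le_trans (norm_nonneg _) (hM 0 ⟨le_rfl, ht.le⟩)
  -- the two-variable integrand
  set F : ℝ → ℝ → ℝ := fun τ θ => c * θ ^ (2*α-1) * (H τ * Real.exp (-(t-τ) * θ^2)) with hF
  -- integrability of (t-τ)^(-α) on Ioo 0 t
  have hrpowInt : IntegrableOn (fun τ : ℝ => (t-τ) ^ (-α)) (Ioo 0 t) := by
    have i1 : IntervalIntegrable (fun x : ℝ => x ^ (-α)) volume 0 t :=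
      intervalIntegrable_rpow' (by linarith)
    have i2 := i1.comp_sub_left t
    simp only [sub_zero, sub_self] at i2
    exact (i2.symm.1.mono_set Ioo_subset_Ioc_self)
  -- measurability of uncurry F
  have hmeas : AEStronglyMeasurable (Function.uncurry F)
      ((volume.restrict (Ioo 0 t)).prod (volume.restrict (Ioi 0))) := by
    have hm : Measurable (Function.uncurry F) := by
      simp only [hF, Function.uncurry]
      have h1 : Measurable fun p : ℝ × ℝ => p.2 ^ (2*α-1) := by measurability
      have h2 : Continuous fun p : ℝ × ℝ => H p.1 * Real.exp (-(t-p.1) * p.2^2) := by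
        apply Continuous.mul (hHcont.comp continuous_fst)
        apply Real.continuous_exp.comp
        continuity
      exact (h1.const_mul c).mul h2.measurable
    exact hm.aestronglyMeasurable
  -- integrability of F on the product
  have hInt : Integrable (Function.uncurry F)
      ((volume.restrict (Ioo 0 t)).prod (volume.restrict (Ioi 0))) := by
    rw [integrable_prod_iff hmeas]
    constructor
    · filter_upwards [ae_restrict_mem measurableSet_Ioo] with τ hτ
      have hb : 0 < t - τ := by simp only [mem_Ioo] at hτ; linarith [hτ.2]
      have base : IntegrableOn (fun θ : ℝ => θ ^ (2*α-1) * Real.exp (-(t-τ) * θ^2)) (Ioi 0) :=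
        integrableOn_rpow_mul_exp_neg_mul_sq hb (by linarith)
      exact (base.const_mul (c * H τ)).congr
        (Filter.Eventually.of_forall fun θ => by simp only [Function.uncurry, hF]; ring)
    · -- the integral of the norm
      have hgInt : Integrable
          (fun τ : ℝ => (|c| * ‖H τ‖ * Real.Gamma α / 2) * (t-τ)^(-α))
          (volume.restrict (Ioo 0 t)) := by
        apply Integrable.bdd_mul (c := |c| * M * Real.Gamma α / 2) hrpowInt
        · exact ((continuous_const.mul hHcont.norm).mul continuous_const
            |>.div_const 2).aestronglyMeasurable
        · refine Filter.Eventually.of_forall fun x => ?_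
          rw [Real.norm_eq_abs, abs_of_nonneg (by positivity)]
          gcongr
          exact hHbd x
      apply hgInt.congr
      filter_upwards [ae_restrict_mem measurableSet_Ioo] with τ hτ
      have hb : 0 < t - τ := by simp only [mem_Ioo] at hτ; linarith [hτ.2]
      have hnorm : ∀ θ ∈ Ioi (0:ℝ), ‖F τ θ‖
          = (|c| * ‖H τ‖) * (θ ^ (2*α-1) * Real.exp (-(t-τ) * θ^2)) := by
        intro θ hθ
        have hθ0 : (0:ℝ) < θ := hθ
        simp only [hF, Real.norm_eq_abs]
        rw [abs_mul, abs_mul, abs_mul, abs_of_nonneg (Real.rpow_nonneg hθ0.le _),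
          abs_of_nonneg (Real.exp_pos _).le]
        ring
      have hEq : (∫ θ in Ioi (0:ℝ), ‖F τ θ‖)
          = (|c| * ‖H τ‖ * Real.Gamma α / 2) * (t-τ)^(-α) := by
        calc (∫ θ in Ioi (0:ℝ), ‖F τ θ‖)
            = ∫ θ in Ioi (0:ℝ), (|c| * ‖H τ‖) * (θ ^ (2*α-1) * Real.exp (-(t-τ) * θ^2)) :=
              setIntegral_congr_fun measurableSet_Ioi hnorm
          _ = (|c| * ‖H τ‖) * ((1/(t-τ)) ^ α * Real.Gamma α / 2) := by
              rw [MeasureTheory.integral_const_mul, caputo_gauss_moment α hα0 hb]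
          _ = (|c| * ‖H τ‖ * Real.Gamma α / 2) * (t-τ)^(-α) := by
              rw [one_div, Real.inv_rpow hb.le, ← Real.rpow_neg hb.le]
              ring
      exact hEq.symm
  -- per-τ identity
  have hperτ : ∀ τ ∈ Ioo (0:ℝ) t,
      (∫ θ in Ioi (0:ℝ), F τ θ) = (1 / Real.Gamma (1-α)) * ((t-τ) ^ (-α) * H τ) := by
    intro τ hτ
    have hb : 0 < t - τ := by linarith [hτ.2]
    calc (∫ θ in Ioi (0:ℝ), F τ θ)
        = ∫ θ in Ioi (0:ℝ), (c * H τ) * (θ ^ (2*α-1) * Real.exp (-(t-τ) * θ^2)) :=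
          setIntegral_congr_fun measurableSet_Ioi fun θ _ => by simp only [hF]; ring
      _ = (c * H τ) * ((1/(t-τ)) ^ α * Real.Gamma α / 2) := by
          rw [MeasureTheory.integral_const_mul, caputo_gauss_moment α hα0 hb]
      _ = (H τ * (1/(t-τ)) ^ α) * (c * Real.Gamma α / 2) := by ring
      _ = (1 / Real.Gamma (1-α)) * ((t-τ) ^ (-α) * H τ) := by
          rw [hkey, one_div (t-τ), Real.inv_rpow hb.le, ← Real.rpow_neg hb.le]
          ring
  -- assemble
  have hLHS : (1 / Real.Gamma (1 - α)) * (∫ τ in (0:ℝ)..t, (t - τ) ^ (-α) * h' τ)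
      = ∫ τ in Ioo (0:ℝ) t, ∫ θ in Ioi (0:ℝ), F τ θ := by
    rw [intervalIntegral.integral_of_le ht.le, MeasureTheory.integral_Ioc_eq_integral_Ioo,
      ← MeasureTheory.integral_const_mul]
    apply setIntegral_congr_fun measurableSet_Ioo
    intro τ hτ
    show (1 / Real.Gamma (1-α)) * ((t-τ) ^ (-α) * h' τ) = ∫ θ in Ioi (0:ℝ), F τ θ
    rw [← hHeq τ ⟨hτ.1.le, hτ.2.le⟩]
    exact (hperτ τ hτ).symm
  have hRHS : (∫ θ in Set.Ioi (0 : ℝ),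
        c * θ ^ (2 * α - 1) * ∫ τ in (0 : ℝ)..t, h' τ * Real.exp (-(t - τ) * θ ^ 2))
      = ∫ θ in Ioi (0:ℝ), ∫ τ in Ioo (0:ℝ) t, F τ θ := by
    apply setIntegral_congr_fun measurableSet_Ioi
    intro θ hθ
    show c * θ ^ (2 * α - 1) * (∫ τ in (0:ℝ)..t, h' τ * Real.exp (-(t - τ) * θ ^ 2))
        = ∫ τ in Ioo (0:ℝ) t, F τ θ
    rw [intervalIntegral.integral_of_le ht.le, MeasureTheory.integral_Ioc_eq_integral_Ioo,
      ← MeasureTheory.integral_const_mul]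
    apply setIntegral_congr_fun measurableSet_Ioo
    intro τ hτ
    show c * θ ^ (2*α-1) * (h' τ * Real.exp (-(t-τ) * θ^2)) = F τ θ
    rw [← hHeq τ ⟨hτ.1.le, hτ.2.le⟩]
  rw [hLHS, hRHS]
  exact MeasureTheory.integral_integral_swap hInt
end

section
/- Let 0 < β < 1, let t > 0, and let u : [0, t] → ℝ be continuous. Define γ_β = 2 sin(πβ)/π and, for θ > 0, ψ(t, θ) = γ_β θ^{1-2β} ∫₀^t u(τ) e^{-(t-τ) θ²} dτ. Then the Riemann–Liouville fractional integral of order β satisfies I_t^β u(t) := (1/Γ(β)) ∫₀^t (t-τ)^{β-1} u(τ) dτ = ∫₀^∞ ψ(t, θ) dθ. -/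
open Real Set intervalIntegral MeasureTheory

/-- Diffusive representation of the Riemann–Liouville fractional integral: for
`0 < β < 1`, `t > 0` and `u` continuous on `[0, t]`,
`(1/Γ(β)) ∫₀^t (t-τ)^(β-1) u(τ) dτ = ∫₀^∞ ψ(t,θ) dθ`, where
`ψ(t,θ) = γ_β θ^(1-2β) ∫₀^t u(τ) exp(-(t-τ)θ²) dτ` and `γ_β = 2 sin(πβ)/π`. -/
theorem riemannLiouville_diffusive_representation (β t : ℝ) (hβ0 : 0 < β) (hβ1 : β < 1)
    (ht : 0 < t) (u : ℝ → ℝ) (hcont : ContinuousOn u (Set.Icc 0 t)) :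
    (1 / Real.Gamma β) * ∫ τ in (0 : ℝ)..t, (t - τ) ^ (β - 1) * u τ =
      ∫ θ in Set.Ioi (0 : ℝ),
        (2 * Real.sin (Real.pi * β) / Real.pi) * θ ^ (1 - 2 * β) *
          ∫ τ in (0 : ℝ)..t, u τ * Real.exp (-(t - τ) * θ ^ 2) := by
  set γ : ℝ := 2 * Real.sin (Real.pi * β) / Real.pi with hγdef
  have hq : (-1 : ℝ) < 1 - 2 * β := by linarith
  -- the key Gaussian moment computation
  have key : ∀ s : ℝ, 0 < s →
      ∫ θ in Ioi (0 : ℝ), θ ^ (1 - 2 * β) * Real.exp (-s * θ ^ 2)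
        = s ^ (β - 1) * ((1 / 2) * Real.Gamma (1 - β)) := by
    intro s hs
    have h2 : ∫ θ in Ioi (0 : ℝ), θ ^ (1 - 2 * β) * Real.exp (-s * θ ^ 2)
        = ∫ θ in Ioi (0 : ℝ), θ ^ (1 - 2 * β) * Real.exp (-s * θ ^ (2 : ℝ)) := by
      refine setIntegral_congr_fun measurableSet_Ioi fun θ hθ => ?_
      rw [← Real.rpow_natCast θ 2]; norm_num
    rw [h2, integral_rpow_mul_exp_neg_mul_rpow two_pos hq hs]
    have e1 : -(1 - 2 * β + 1) / 2 = β - 1 := by ring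
    have e2 : (1 - 2 * β + 1) / 2 = 1 - β := by ring
    rw [e1, e2]; ring
  -- reflection formula
  have hπ : (0 : ℝ) < Real.pi := Real.pi_pos
  have hsin : 0 < Real.sin (Real.pi * β) :=
    Real.sin_pos_of_pos_of_lt_pi (by positivity) (by nlinarith)
  have hΓβ : 0 < Real.Gamma β := Real.Gamma_pos_of_pos hβ0
  have hrefl : Real.Gamma β * Real.Gamma (1 - β) * Real.sin (Real.pi * β) = Real.pi := by
    rw [Real.Gamma_mul_Gamma_one_sub β]; field_simp
  have hΓ : γ * ((1 / 2) * Real.Gamma (1 - β)) = 1 / Real.Gamma β := by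
    rw [hγdef]; field_simp; linear_combination hrefl
  -- boundedness of u
  obtain ⟨M, hM⟩ := isCompact_Icc.exists_bound_of_continuousOn hcont
  have hM0 : 0 ≤ M := le_trans (norm_nonneg _) (hM 0 (by constructor <;> linarith))
  -- measures
  set ν : Measure ℝ := volume.restrict (Ioc 0 t) with hν
  set μ : Measure ℝ := volume.restrict (Ioi 0) with hμ
  have hum : AEStronglyMeasurable u ν :=
    (hcont.mono Ioc_subset_Icc_self).aestronglyMeasurable measurableSet_Ioc
  -- the integrand
  set F : ℝ → ℝ → ℝ := fun θ τ => γ * θ ^ (1 - 2 * β) * (u τ * Real.exp (-(t - τ) * θ ^ 2))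
    with hF
  have hmes : AEStronglyMeasurable (Function.uncurry F) (μ.prod ν) := by
    have h1 : AEStronglyMeasurable (fun p : ℝ × ℝ => u p.2) (μ.prod ν) := hum.comp_snd
    have h2 : Measurable fun p : ℝ × ℝ =>
        γ * p.1 ^ (1 - 2 * β) * Real.exp (-(t - p.2) * p.1 ^ 2) := by
      fun_prop
    have := (h2.aestronglyMeasurable (μ := μ.prod ν)).mul h1
    refine this.congr (Filter.Eventually.of_forall fun p => ?_)
    simp only [Function.uncurry, hF, Pi.mul_apply]; ring
  -- a.e. on ν, τ < t
  have hae : ∀ᵐ τ ∂ν, τ ∈ Ioc 0 t ∧ τ ≠ t := by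
    have h1 : ∀ᵐ τ ∂ν, τ ∈ Ioc 0 t := ae_restrict_mem measurableSet_Ioc
    have h2 : ∀ᵐ τ ∂ν, τ ≠ t := by
      rw [ae_iff]
      have : {τ : ℝ | ¬ τ ≠ t} = {t} := by ext x; simp
      rw [this]
      exact le_zero_iff.mp ((Measure.restrict_apply_le _ _).trans (measure_singleton t).le)
    filter_upwards [h1, h2] with τ h h' using ⟨h, h'⟩
  -- slice integrability
  have hslice : ∀ᵐ τ ∂ν, Integrable (fun θ => F θ τ) μ := by
    filter_upwards [hae] with τ ⟨hτ, hτne⟩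
    have hpos : 0 < t - τ := sub_pos.2 (lt_of_le_of_ne hτ.2 hτne)
    have hi := (integrableOn_rpow_mul_exp_neg_mul_sq hpos hq).const_mul (γ * u τ)
    exact hi.congr (Filter.Eventually.of_forall fun θ => by simp only [hF]; ring)
  -- the norm integral
  have hnormint : Integrable (fun τ => ∫ θ, ‖F θ τ‖ ∂μ) ν := by
    have hg : Integrable (fun τ => |γ| * ((1 / 2) * Real.Gamma (1 - β)) *
        (|u τ| * (t - τ) ^ (β - 1))) ν := by
      have hrpow : IntegrableOn (fun τ => (t - τ) ^ (β - 1)) (Ioc 0 t) := by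
        have h1 := (intervalIntegral.intervalIntegrable_rpow'
          (show (-1 : ℝ) < β - 1 by linarith) (a := 0) (b := t)).comp_sub_left t
        rw [sub_zero, sub_self] at h1
        exact (intervalIntegrable_iff_integrableOn_Ioc_of_le ht.le).mp h1.symm
      have habs : AEStronglyMeasurable (fun τ => |u τ|) ν := hum.norm
      have hbdd : ∀ᵐ τ ∂ν, ‖|u τ|‖ ≤ M := by
        filter_upwards [hae] with τ ⟨hτ, _⟩
        rw [Real.norm_eq_abs, abs_abs, ← Real.norm_eq_abs]; exact hM τ ⟨hτ.1.le, hτ.2⟩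
      exact ((Integrable.bdd_mul hrpow habs hbdd).const_mul _)
    refine hg.congr ?_
    filter_upwards [hae] with τ ⟨hτ, hτne⟩
    symm
    have hpos : 0 < t - τ := sub_pos.2 (lt_of_le_of_ne hτ.2 hτne)
    have h1 : ∀ θ ∈ Ioi (0 : ℝ), ‖F θ τ‖
        = |γ| * |u τ| * (θ ^ (1 - 2 * β) * Real.exp (-(t - τ) * θ ^ 2)) := by
      intro θ hθ
      have hθ0 : (0 : ℝ) < θ := hθ
      rw [hF]; simp only [Real.norm_eq_abs, abs_mul]
      rw [abs_of_pos (Real.rpow_pos_of_pos hθ0 _), abs_of_pos (Real.exp_pos _)]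
      ring
    calc (∫ θ, ‖F θ τ‖ ∂μ)
        = ∫ θ in Ioi (0:ℝ), |γ| * |u τ| *
            (θ ^ (1 - 2 * β) * Real.exp (-(t - τ) * θ ^ 2)) :=
          setIntegral_congr_fun measurableSet_Ioi h1
      _ = |γ| * |u τ| * ∫ θ in Ioi (0:ℝ),
            θ ^ (1 - 2 * β) * Real.exp (-(t - τ) * θ ^ 2) := by
          rw [MeasureTheory.integral_const_mul]
      _ = |γ| * ((1 / 2) * Real.Gamma (1 - β)) * (|u τ| * (t - τ) ^ (β - 1)) := by
          rw [key _ hpos]; ring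
  have hInt : Integrable (Function.uncurry F) (μ.prod ν) :=
    (integrable_prod_iff' hmes).2 ⟨hslice, hnormint⟩
  have hswap := MeasureTheory.integral_integral_swap hInt
  -- rewrite RHS
  have hRHS : (∫ θ in Set.Ioi (0 : ℝ),
        γ * θ ^ (1 - 2 * β) * ∫ τ in (0 : ℝ)..t, u τ * Real.exp (-(t - τ) * θ ^ 2))
      = ∫ θ, ∫ τ, F θ τ ∂ν ∂μ := by
    refine setIntegral_congr_fun measurableSet_Ioi fun θ hθ => ?_
    rw [intervalIntegral.integral_of_le ht.le, ← MeasureTheory.integral_const_mul]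
  rw [hRHS, hswap]
  -- compute the τ integral
  have hfinal : (∫ τ, ∫ θ, F θ τ ∂μ ∂ν)
      = ∫ τ in Ioc (0:ℝ) t, (1 / Real.Gamma β) * ((t - τ) ^ (β - 1) * u τ) := by
    refine integral_congr_ae ?_
    filter_upwards [hae] with τ ⟨hτ, hτne⟩
    have hpos : 0 < t - τ := sub_pos.2 (lt_of_le_of_ne hτ.2 hτne)
    have h1 : (∫ θ, F θ τ ∂μ)
        = γ * u τ * ∫ θ in Ioi (0:ℝ), θ ^ (1 - 2 * β) * Real.exp (-(t - τ) * θ ^ 2) := by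
      rw [← MeasureTheory.integral_const_mul]
      refine setIntegral_congr_fun measurableSet_Ioi fun θ hθ => ?_
      simp only [hF]; ring
    rw [h1, key _ hpos]
    calc γ * u τ * ((t - τ) ^ (β - 1) * ((1 / 2) * Real.Gamma (1 - β)))
        = (γ * ((1 / 2) * Real.Gamma (1 - β))) * ((t - τ) ^ (β - 1) * u τ) := by ring
      _ = (1 / Real.Gamma β) * ((t - τ) ^ (β - 1) * u τ) := by rw [hΓ]
  rw [hfinal, intervalIntegral.integral_of_le ht.le, ← MeasureTheory.integral_const_mul]
end

section
/- Let 0 < α < 1, set β = 1 - α and γ_β = 2 sin(πβ)/π, let t > 0, and let u : [0, t] → ℝ be continuously differentiable. For θ > 0 define Ψ(θ) = γ_β u(0) / θ^{1+2β} and ψ(t, θ) = Ψ(θ) e^{-θ² t} + γ_β θ^{1-2β} ∫₀^t u(τ) e^{-(t-τ) θ²} dτ. Then the Caputo fractional derivative satisfies D_t^α u(t) = ∫₀^∞ ( -θ² ψ(t, θ) + γ_β θ^{1-2β} u(t) ) dθ. -/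
open Real Set intervalIntegral

open MeasureTheory

lemma caputo_key {α : ℝ} (hα0 : 0 < α) {b : ℝ} (hb : 0 < b) :
    ∫ θ in Set.Ioi (0:ℝ), θ ^ (1 - 2*(1-α)) * Real.exp (-b * θ ^ 2)
      = b ^ (-α) * (Real.Gamma α / 2) := by
  have h1 : ∫ θ in Set.Ioi (0:ℝ), θ ^ (1 - 2*(1-α)) * Real.exp (-b * θ ^ 2)
      = ∫ θ in Set.Ioi (0:ℝ), θ ^ (1 - 2*(1-α)) * Real.exp (-b * θ ^ (2:ℝ)) := by
    refine setIntegral_congr_fun measurableSet_Ioi fun x hx => ?_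
    rw [Real.rpow_two]
  rw [h1, integral_rpow_mul_exp_neg_mul_rpow two_pos (by linarith) hb]
  have h2 : (-(1 - 2*(1-α) + 1) / 2 : ℝ) = -α := by ring
  have h3 : ((1 - 2*(1-α) + 1) / 2 : ℝ) = α := by ring
  rw [h2, h3]
  ring

lemma caputo_const {α γβ : ℝ} (hα0 : 0 < α) (hα1 : α < 1)
    (hγ : γβ = 2 * Real.sin (Real.pi * (1 - α)) / Real.pi) :
    γβ * (Real.Gamma α / 2) = 1 / Real.Gamma (1 - α) := by
  have hπ := Real.pi_pos
  have hsin : 0 < Real.sin (Real.pi * α) :=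
    Real.sin_pos_of_pos_of_lt_pi (by positivity) (by nlinarith)
  have hΓ : 0 < Real.Gamma (1 - α) := Real.Gamma_pos_of_pos (by linarith)
  have hrefl := Real.Gamma_mul_Gamma_one_sub α
  have hsin2 : Real.sin (Real.pi * (1 - α)) = Real.sin (Real.pi * α) := by
    rw [mul_sub, mul_one, Real.sin_pi_sub]
  rw [hγ, hsin2]
  have hsin' : Real.sin (α * Real.pi) ≠ 0 := by rw [mul_comm]; exact hsin.ne'
  field_simp at hrefl ⊢
  nlinarith [hrefl]

lemma caputo_step1 (α t : ℝ) (ht : 0 < t) (u u' : ℝ → ℝ)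
    (hderiv : ∀ τ ∈ Set.Icc (0 : ℝ) t, HasDerivWithinAt u (u' τ) (Set.Icc 0 t) τ)
    (hcont : ContinuousOn u' (Set.Icc 0 t))
    (γβ : ℝ) {θ : ℝ} (hθ : 0 < θ) :
    -θ ^ 2 * ((γβ * u 0 / θ ^ (1 + 2 * (1-α))) * Real.exp (-θ ^ 2 * t) +
        γβ * θ ^ (1 - 2 * (1-α)) * ∫ τ in (0 : ℝ)..t, u τ * Real.exp (-(t - τ) * θ ^ 2))
      + γβ * θ ^ (1 - 2 * (1-α)) * u t
    = γβ * θ ^ (1 - 2 * (1-α)) * ∫ τ in (0 : ℝ)..t, u' τ * Real.exp (-(t - τ) * θ ^ 2) := by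
  have hu_cont : ContinuousOn u (Icc 0 t) := fun x hx => (hderiv x hx).continuousWithinAt
  have hecont : Continuous fun τ : ℝ => Real.exp (-(t - τ) * θ ^ 2) := by continuity
  have hI1 : IntervalIntegrable (fun τ => u' τ * Real.exp (-(t - τ) * θ ^ 2)) volume 0 t := by
    apply ContinuousOn.intervalIntegrable
    rw [uIcc_of_le ht.le]
    exact hcont.mul hecont.continuousOn
  have hI2 : IntervalIntegrable (fun τ => u τ * (θ ^ 2 * Real.exp (-(t - τ) * θ ^ 2)))
      volume 0 t := by
    apply ContinuousOn.intervalIntegrable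
    rw [uIcc_of_le ht.le]
    exact hu_cont.mul ((continuous_const.mul hecont).continuousOn)
  have hF : ∀ τ ∈ Ioo (0:ℝ) t, HasDerivWithinAt (fun τ => u τ * Real.exp (-(t - τ) * θ ^ 2))
      (u' τ * Real.exp (-(t - τ) * θ ^ 2) + u τ * (θ ^ 2 * Real.exp (-(t - τ) * θ ^ 2)))
      (Ioi τ) τ := by
    intro τ hτ
    have hu : HasDerivAt u (u' τ) τ :=
      (hderiv τ (Ioo_subset_Icc_self hτ)).hasDerivAt (Icc_mem_nhds hτ.1 hτ.2)
    have h1 : HasDerivAt (fun τ : ℝ => -(t - τ) * θ ^ 2) (θ ^ 2) τ := by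
      simpa using (((hasDerivAt_id τ).const_sub t).neg.mul_const (θ ^ 2))
    have he : HasDerivAt (fun τ : ℝ => Real.exp (-(t - τ) * θ ^ 2))
        (θ ^ 2 * Real.exp (-(t - τ) * θ ^ 2)) τ := by
      simpa [mul_comm] using h1.exp
    exact (hu.mul he).hasDerivWithinAt
  have hFcont : ContinuousOn (fun τ => u τ * Real.exp (-(t - τ) * θ ^ 2)) (Icc 0 t) :=
    hu_cont.mul hecont.continuousOn
  have hFTC := integral_eq_sub_of_hasDeriv_right_of_le ht.le hFcont hF (hI1.add hI2)
  rw [intervalIntegral.integral_add hI1 hI2] at hFTC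
  have hmul : ∫ τ in (0:ℝ)..t, u τ * (θ ^ 2 * Real.exp (-(t - τ) * θ ^ 2))
      = θ ^ 2 * ∫ τ in (0:ℝ)..t, u τ * Real.exp (-(t - τ) * θ ^ 2) := by
    rw [← intervalIntegral.integral_const_mul]
    congr 1; ext τ; ring
  rw [hmul] at hFTC
  have he1 : (-(t - t) * θ ^ 2 : ℝ) = 0 := by ring
  have he2 : (-(t - 0) * θ ^ 2 : ℝ) = -θ ^ 2 * t := by ring
  rw [he1, he2, Real.exp_zero, mul_one] at hFTC
  have hpow : θ ^ 2 / θ ^ ((1:ℝ) + 2 * (1-α)) = θ ^ ((1:ℝ) - 2 * (1-α)) := by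
    rw [← Real.rpow_two, ← Real.rpow_sub hθ]
    congr 1; ring
  have hpow' : θ ^ 2 * (γβ * u 0 / θ ^ ((1:ℝ) + 2 * (1-α)))
      = γβ * u 0 * θ ^ ((1:ℝ) - 2 * (1-α)) := by
    rw [mul_div_assoc', mul_comm (θ ^ 2), mul_div_assoc, hpow]
  linear_combination (-(γβ) * θ ^ ((1:ℝ) - 2 * (1-α))) * hFTC
    + (-(Real.exp (-θ ^ 2 * t))) * hpow'

/-- Extended diffusive representation of the Caputo fractional derivative.
For `0 < α < 1`, `β = 1 - α`, `γ_β = 2 sin(πβ)/π`, `t > 0` and `u` continuously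
differentiable on `[0, t]` with derivative `u'`, setting
`Ψ(θ) = γ_β u(0)/θ^(1+2β)` and
`ψ(t,θ) = Ψ(θ) e^(-θ² t) + γ_β θ^(1-2β) ∫₀^t u(τ) e^(-(t-τ)θ²) dτ`, the Caputo
derivative satisfies
`D_t^α u(t) = ∫₀^∞ (-θ² ψ(t,θ) + γ_β θ^(1-2β) u(t)) dθ`. -/
theorem caputo_extended_diffusive_representation (α t : ℝ) (hα0 : 0 < α) (hα1 : α < 1)
    (ht : 0 < t) (u u' : ℝ → ℝ)
    (hderiv : ∀ τ ∈ Set.Icc (0 : ℝ) t, HasDerivWithinAt u (u' τ) (Set.Icc 0 t) τ)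
    (hcont : ContinuousOn u' (Set.Icc 0 t))
    (β γβ : ℝ) (hβ : β = 1 - α) (hγ : γβ = 2 * Real.sin (Real.pi * β) / Real.pi)
    (Ψ : ℝ → ℝ) (hΨ : ∀ θ : ℝ, 0 < θ → Ψ θ = γβ * u 0 / θ ^ (1 + 2 * β))
    (ψ : ℝ → ℝ → ℝ)
    (hψ : ∀ θ : ℝ, 0 < θ → ψ t θ =
      Ψ θ * Real.exp (-θ ^ 2 * t) +
        γβ * θ ^ (1 - 2 * β) * ∫ τ in (0 : ℝ)..t, u τ * Real.exp (-(t - τ) * θ ^ 2)) :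
    (1 / Real.Gamma (1 - α)) * ∫ τ in (0 : ℝ)..t, (t - τ) ^ (-α) * u' τ =
      ∫ θ in Set.Ioi (0 : ℝ), (-θ ^ 2 * ψ t θ + γβ * θ ^ (1 - 2 * β) * u t) := by
  subst hβ
  have hq : (-1:ℝ) < 1 - 2*(1-α) := by linarith
  set μ : Measure ℝ := volume.restrict (Ioi 0) with hμ
  set ν : Measure ℝ := volume.restrict (Ioc 0 t) with hν
  set f : ℝ → ℝ → ℝ :=
    fun θ τ => γβ * u' τ * (θ ^ (1 - 2*(1-α)) * Real.exp (-(t - τ) * θ ^ 2)) with hf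
  -- Step 2: rewrite the RHS integrand pointwise on `Ioi 0`
  have step2 : (∫ θ in Set.Ioi (0:ℝ), (-θ ^ 2 * ψ t θ + γβ * θ ^ (1 - 2 * (1-α)) * u t))
      = ∫ θ in Set.Ioi (0:ℝ), ∫ τ in Set.Ioc (0:ℝ) t, f θ τ := by
    refine setIntegral_congr_fun measurableSet_Ioi fun θ hθ => ?_
    rw [Set.mem_Ioi] at hθ
    rw [hψ θ hθ, hΨ θ hθ, caputo_step1 α t ht u u' hderiv hcont γβ hθ,
      intervalIntegral.integral_of_le ht.le, ← MeasureTheory.integral_const_mul]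
    refine setIntegral_congr_fun measurableSet_Ioc fun τ hτ => ?_
    simp only [hf]; ring
  -- measurability on the product
  have hmeas : AEStronglyMeasurable (Function.uncurry f) (μ.prod ν) := by
    have h1 : AEStronglyMeasurable (fun p : ℝ × ℝ => u' p.2) (μ.prod ν) :=
      ((hcont.mono Ioc_subset_Icc_self).aestronglyMeasurable measurableSet_Ioc).comp_snd
    have hco : ContinuousOn (fun x : ℝ => x ^ (1 - 2*(1-α))) (Ioi 0) := fun x hx =>
      (Real.continuousAt_rpow_const x _ (Or.inl (ne_of_gt hx))).continuousWithinAt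
    have h2 : AEStronglyMeasurable (fun p : ℝ × ℝ => p.1 ^ (1 - 2*(1-α))) (μ.prod ν) :=
      (hco.aestronglyMeasurable measurableSet_Ioi).comp_fst
    have h3 : AEStronglyMeasurable (fun p : ℝ × ℝ => Real.exp (-(t - p.2) * p.1 ^ 2))
        (μ.prod ν) := (by continuity : Continuous fun p : ℝ × ℝ =>
          Real.exp (-(t - p.2) * p.1 ^ 2)).aestronglyMeasurable
    exact (aestronglyMeasurable_const.mul h1).mul (h2.mul h3)
  -- a.e. facts on ν
  have h0 : ∀ᵐ τ : ℝ, τ ≠ t := by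
    simp only [MeasureTheory.ae_iff, not_not]
    rw [Set.setOf_eq_eq_singleton]
    exact measure_singleton t
  -- integrability on the product
  have hInt : Integrable (Function.uncurry f) (μ.prod ν) := by
    rw [integrable_prod_iff' hmeas]
    constructor
    · filter_upwards [ae_restrict_mem measurableSet_Ioc, ae_restrict_of_ae h0] with τ hτ hne
      have hs : 0 < t - τ := sub_pos.2 (lt_of_le_of_ne hτ.2 hne)
      exact (integrableOn_rpow_mul_exp_neg_mul_sq hs hq).const_mul (γβ * u' τ)
    · obtain ⟨M, hM⟩ := isCompact_Icc.exists_bound_of_continuousOn hcont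
      have hgint : Integrable
          (fun τ => (|γβ| * M * (Real.Gamma α / 2)) * (t - τ) ^ (-α)) ν := by
        have h1 : IntervalIntegrable (fun x : ℝ => x ^ (-α)) volume 0 t :=
          intervalIntegrable_rpow' (by linarith)
        have h2 := (h1.comp_sub_left t).symm
        rw [sub_self, sub_zero] at h2
        exact ((intervalIntegrable_iff_integrableOn_Ioc_of_le ht.le).1 h2).const_mul _
      refine Integrable.mono' hgint hmeas.norm.prod_swap.integral_prod_right' ?_
      filter_upwards [ae_restrict_mem measurableSet_Ioc, ae_restrict_of_ae h0] with τ hτ hne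
      have hs : 0 < t - τ := sub_pos.2 (lt_of_le_of_ne hτ.2 hne)
      have hval : ∫ θ, ‖f θ τ‖ ∂μ
          = |γβ * u' τ| * ((t - τ) ^ (-α) * (Real.Gamma α / 2)) := by
        have hcg : ∀ θ ∈ Set.Ioi (0:ℝ), ‖f θ τ‖
            = |γβ * u' τ| * (θ ^ (1 - 2*(1-α)) * Real.exp (-(t - τ) * θ ^ 2)) := by
          intro θ hθ
          rw [Set.mem_Ioi] at hθ
          have hnn : 0 ≤ θ ^ (1 - 2*(1-α)) * Real.exp (-(t - τ) * θ ^ 2) := by positivity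
          simp only [hf, Real.norm_eq_abs, abs_mul, abs_of_nonneg hnn]
        rw [hμ, setIntegral_congr_fun measurableSet_Ioi hcg, MeasureTheory.integral_const_mul,
          caputo_key hα0 hs]
      have hnorm : ‖|γβ * u' τ| * ((t - τ) ^ (-α) * (Real.Gamma α / 2))‖
          = |γβ * u' τ| * ((t - τ) ^ (-α) * (Real.Gamma α / 2)) := by
        refine Real.norm_of_nonneg ?_
        have h1 : (0:ℝ) ≤ (t - τ) ^ (-α) := Real.rpow_nonneg hs.le _
        have h2 : (0:ℝ) ≤ Real.Gamma α := (Real.Gamma_pos_of_pos hα0).le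
        positivity
      simp only [Function.uncurry_apply_pair]
      rw [hval, hnorm]
      have hMτ : |u' τ| ≤ M := by
        simpa [Real.norm_eq_abs] using hM τ (Set.Ioc_subset_Icc_self hτ)
      have h1 : (0:ℝ) ≤ (t - τ) ^ (-α) := Real.rpow_nonneg hs.le _
      have h2 : (0:ℝ) < Real.Gamma α := Real.Gamma_pos_of_pos hα0
      have h3 : |γβ * u' τ| ≤ |γβ| * M := by
        rw [abs_mul]
        have := abs_nonneg γβ
        nlinarith [abs_nonneg (u' τ)]
      nlinarith [mul_le_mul_of_nonneg_right h3 (mul_nonneg h1 h2.le)]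
  -- swap the integrals and conclude
  rw [step2]
  have hswap := MeasureTheory.integral_integral_swap hInt
  rw [hμ, hν] at hswap
  rw [hswap, intervalIntegral.integral_of_le ht.le, ← MeasureTheory.integral_const_mul]
  refine integral_congr_ae ?_
  filter_upwards [ae_restrict_mem measurableSet_Ioc, ae_restrict_of_ae h0] with τ hτ hne
  have hs : 0 < t - τ := sub_pos.2 (lt_of_le_of_ne hτ.2 hne)
  simp only [hf]
  rw [MeasureTheory.integral_const_mul, caputo_key hα0 hs]
  have hc := caputo_const hα0 hα1 hγ
  linear_combination (-(t - τ) ^ (-α) * u' τ) * hc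
end

section
/- Let 0 < α < 1, ε > 0, γ_α = 2 sin(πα)/π, let μ_1, …, μ_L be positive reals and let the nodes satisfy 0 < θ_1 < θ_2 < ⋯ < θ_L. Let S be the real (L+1)×(L+1) matrix with entries S_{0,0} = 0, S_{0,ℓ} = −ε μ_ℓ for ℓ = 1, …, L, S_{j,0} = 0 for j = 1, …, L, and S_{j,ℓ} = −(δ_{jℓ} θ_j² + ε γ_α θ_j^{2α−1} μ_ℓ) for j, ℓ = 1, …, L (δ the Kronecker delta). Then 0 is a simple eigenvalue of S, and S has exactly L further eigenvalues λ_1, …, λ_L, all real and negative, satisfying the interlacing λ_L < −θ_L² < ⋯ < −θ_{ℓ+1}² < λ_ℓ < −θ_ℓ² < ⋯ < λ_1 < −θ_1² < 0. -/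
open Matrix Polynomial Finset Filter


lemma aux_ivt {f : ℝ → ℝ} (hf : Continuous f) {a b : ℝ} (hab : a < b)
    (h : f a * f b < 0) : ∃ x ∈ Set.Ioo a b, f x = 0 := by
  rcases mul_neg_iff.1 h with ⟨ha, hb⟩ | ⟨ha, hb⟩
  · obtain ⟨x, hx, hfx⟩ := intermediate_value_Ioo' hab.le hf.continuousOn
      (a := a) (b := b) ⟨hb, ha⟩
    exact ⟨x, hx, hfx⟩
  · obtain ⟨x, hx, hfx⟩ := intermediate_value_Ioo hab.le hf.continuousOn
      (a := a) (b := b) ⟨ha, hb⟩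
    exact ⟨x, hx, hfx⟩

lemma aux_charpoly_eval {n : ℕ} (M : Matrix (Fin n) (Fin n) ℝ) (x : ℝ) :
    M.charpoly.eval x
      = (Matrix.of fun i j => (if i = j then x else 0) - M i j).det := by
  rw [Matrix.charpoly, ← Polynomial.coe_evalRingHom, RingHom.map_det]
  congr 1
  ext i j
  by_cases h : i = j
  · subst h; simp [charmatrix_apply_eq]
  · simp [charmatrix_apply_ne _ _ _ h, h]

lemma aux_charpoly_rank_one {n : ℕ} (t u w : Fin n → ℝ) :
    (Matrix.of fun i j : Fin n =>
        -((if i = j then t i else 0) + u i * w j)).charpoly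
      = ∏ i, (X + C (t i))
        + ∑ i, C (u i * w i) * ∏ k ∈ univ.erase i, (X + C (t k)) := by
  apply Polynomial.eq_of_infinite_eval_eq
  apply Set.Infinite.mono (s := (Set.range fun k : Fin n => -(t k))ᶜ)
  swap
  · exact Set.Finite.infinite_compl (Set.finite_range _)
  intro x hx
  have hd : ∀ k, x + t k ≠ 0 := by
    intro k hk
    exact hx ⟨k, show -t k = x by linarith⟩
  simp only [Set.mem_setOf_eq]
  rw [aux_charpoly_eval]
  set d : Fin n → ℝ := fun i => x + t i with hdd
  have hA : (Matrix.of fun i j => (if i = j then x else 0) -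
      (Matrix.of fun i j : Fin n => -((if i = j then t i else 0) + u i * w j)) i j)
      = Matrix.diagonal d *
        (1 + Matrix.replicateCol Unit (fun i => u i / d i) * Matrix.replicateRow Unit w) := by
    ext i j
    rw [Matrix.diagonal_mul]
    have hcr : (Matrix.replicateCol Unit (fun i => u i / d i) * Matrix.replicateRow Unit w) i j
        = (u i / d i) * w j := by
      simp [Matrix.mul_apply]
    rw [Matrix.add_apply, hcr, Matrix.one_apply]
    by_cases h : i = j
    · subst h
      simp only [Matrix.of_apply, if_pos rfl]
      field_simp [show d i ≠ 0 from hd i]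
      simp only [if_pos trivial, hdd]
      ring
    · simp only [Matrix.of_apply, if_neg h]
      field_simp [show d i ≠ 0 from hd i]
      try ring
  rw [hA, Matrix.det_mul, Matrix.det_diagonal, Matrix.det_one_add_replicateCol_mul_replicateRow]
  have hrhs : Polynomial.eval x (∏ i, (X + C (t i))
        + ∑ i, C (u i * w i) * ∏ k ∈ univ.erase i, (X + C (t k)))
      = ∏ i, d i + ∑ i, (u i * w i) * ∏ k ∈ univ.erase i, d k := by
    simp [eval_prod, eval_finset_sum, hdd]
  rw [hrhs, dotProduct, mul_add, mul_one, Finset.mul_sum]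
  congr 1
  apply Finset.sum_congr rfl
  intro i _
  rw [← Finset.mul_prod_erase univ d (Finset.mem_univ i)]
  field_simp [show d i ≠ 0 from hd i]

/-- If the first column of `S` vanishes, `charpoly S = X * charpoly (minor)`. -/
lemma aux_charpoly_zero_col {n : ℕ} (S : Matrix (Fin (n+1)) (Fin (n+1)) ℝ)
    (h0 : ∀ i, S i 0 = 0) :
    S.charpoly = X * (S.submatrix Fin.succ Fin.succ).charpoly := by
  have hsub : (charmatrix S).submatrix Fin.succ Fin.succ
      = charmatrix (S.submatrix Fin.succ Fin.succ) := by
    ext i j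
    by_cases h : i = j
    · subst h; simp [charmatrix_apply_eq]
    · rw [Matrix.submatrix_apply, charmatrix_apply_ne _ _ _ h,
        charmatrix_apply_ne _ _ _ (fun hc => h (Fin.succ_injective _ hc))]
      rfl
  rw [Matrix.charpoly, Matrix.det_succ_column_zero, Fin.sum_univ_succ]
  have h1 : ∀ i : Fin n, charmatrix S i.succ 0 = 0 := by
    intro i
    rw [charmatrix_apply_ne _ _ _ (by simp [Fin.succ_ne_zero]), h0, map_zero, neg_zero]
  have h2 : charmatrix S 0 0 = X := by
    rw [charmatrix_apply_eq, h0, map_zero, sub_zero]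
  simp only [h1, h2, Fin.val_zero, pow_zero, one_smul, Fin.succAbove_zero,
    zero_mul, smul_zero, mul_zero, Finset.sum_const_zero, add_zero, zero_smul]
  rw [hsub, Matrix.charpoly, one_mul]

/-- Sign of the product `∏_{k ≠ j} (θ k ^ 2 - θ j ^ 2)`. -/
lemma aux_sign {n : ℕ} (θ : Fin n → ℝ) (hθ0 : ∀ k, 0 < θ k) (hmono : StrictMono θ)
    (j : Fin n) :
    0 < (-1 : ℝ) ^ (j : ℕ) * ∏ k ∈ univ.erase j, (θ k ^ 2 - θ j ^ 2) := by
  have hsplit : univ.erase j = Finset.Iio j ∪ Finset.Ioi j := by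
    ext k
    simp only [Finset.mem_erase, Finset.mem_union, Finset.mem_Iio, Finset.mem_Ioi,
      Finset.mem_univ, and_true]
    exact ne_iff_lt_or_gt
  have hdisj : Disjoint (Finset.Iio j) (Finset.Ioi j) := by
    rw [Finset.disjoint_left]
    intro a ha hb
    exact absurd (Finset.mem_Iio.1 ha) (not_lt.2 (Finset.mem_Ioi.1 hb).le)
  rw [hsplit, Finset.prod_union hdisj, ← mul_assoc]
  have hcard : (Finset.Iio j).card = (j : ℕ) := by simp
  have h1 : (-1 : ℝ) ^ (j : ℕ) * ∏ k ∈ Finset.Iio j, (θ k ^ 2 - θ j ^ 2)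
      = ∏ k ∈ Finset.Iio j, (θ j ^ 2 - θ k ^ 2) := by
    rw [← hcard]
    rw [← Finset.prod_const (-1 : ℝ), ← Finset.prod_mul_distrib]
    congr 1
    ext k
    ring
  rw [h1]
  apply mul_pos
  · apply Finset.prod_pos
    intro k hk
    have : θ k < θ j := hmono (Finset.mem_Iio.1 hk)
    nlinarith [hθ0 k]
  · apply Finset.prod_pos
    intro k hk
    have : θ j < θ k := hmono (Finset.mem_Ioi.1 hk)
    nlinarith [hθ0 j]

lemma aux_monic {n : ℕ} (t b : Fin n → ℝ) :
    (∏ i, (X + C (t i))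
      + ∑ i, C (b i) * ∏ k ∈ univ.erase i, (X + C (t k))).Monic ∧
    (∏ i, (X + C (t i))
      + ∑ i, C (b i) * ∏ k ∈ univ.erase i, (X + C (t k))).natDegree = n := by
  set Q : ℝ[X] := ∏ i, (X + C (t i)) with hQ
  have hQm : Q.Monic := monic_prod_of_monic _ _ fun i _ => monic_X_add_C (t i)
  have hQd : Q.natDegree = n := by
    rw [hQ, natDegree_prod _ _ fun i _ => (monic_X_add_C (t i)).ne_zero]
    simp [natDegree_X_add_C]
  have hQdeg : Q.degree = (n : ℕ) := by
    rw [degree_eq_natDegree hQm.ne_zero, hQd]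
  have hS : (∑ i, C (b i) * ∏ k ∈ univ.erase i, (X + C (t k))).degree < (n : ℕ) := by
    apply lt_of_le_of_lt (degree_sum_le _ _)
    rw [Finset.sup_lt_iff (by exact_mod_cast WithBot.bot_lt_coe n)]
    intro i _
    apply lt_of_le_of_lt (degree_mul_le _ _)
    have h1 : (∏ k ∈ univ.erase i, (X + C (t k))).degree = ((n - 1 : ℕ) : WithBot ℕ) := by
      have hm : (∏ k ∈ univ.erase i, (X + C (t k))).Monic :=
        monic_prod_of_monic _ _ fun k _ => monic_X_add_C (t k)
      rw [degree_eq_natDegree hm.ne_zero,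
        natDegree_prod _ _ fun k _ => (monic_X_add_C (t k)).ne_zero]
      simp [natDegree_X_add_C, Finset.card_erase_of_mem]
    calc (C (b i)).degree + (∏ k ∈ univ.erase i, (X + C (t k))).degree
        ≤ 0 + ((n - 1 : ℕ) : WithBot ℕ) := add_le_add degree_C_le (le_of_eq h1)
      _ = ((n - 1 : ℕ) : WithBot ℕ) := zero_add _
      _ < (n : ℕ) := by
          exact_mod_cast Nat.sub_lt i.pos one_pos
  constructor
  · exact hQm.add_of_left (hQdeg ▸ hS)
  · rw [natDegree_eq_of_degree_eq (degree_add_eq_left_of_degree_lt (hQdeg ▸ hS)), hQd]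

lemma aux_exists_lower {n : ℕ} {P : ℝ[X]} (hm : P.Monic) (hdeg : P.natDegree = n)
    (hn : 0 < n) (B : ℝ) : ∃ b < B, 0 < (-1 : ℝ) ^ n * P.eval b := by
  set Q : ℝ[X] := P.comp (-X) with hQ
  have hnd : (-X : ℝ[X]).natDegree = 1 := by simp
  have hQd : Q.natDegree = n := by rw [hQ, natDegree_comp, hnd, mul_one, hdeg]
  have hQlc : Q.leadingCoeff = (-1 : ℝ) ^ n := by
    rw [hQ, leadingCoeff_comp (by rw [hnd]; omega), hm.leadingCoeff, one_mul, hdeg]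
    simp
  have hQdeg : 0 < Q.degree := by
    rw [degree_eq_natDegree (fun h => by simp [h] at hQd; omega), hQd]
    exact_mod_cast hn
  have heval : ∀ x : ℝ, Q.eval x = P.eval (-x) := by
    intro x; rw [hQ, eval_comp]; simp
  rcases Nat.even_or_odd n with he | ho
  · have hlc : 0 ≤ Q.leadingCoeff := by rw [hQlc, he.neg_one_pow]; norm_num
    have ht := Polynomial.tendsto_atTop_of_leadingCoeff_nonneg Q hQdeg hlc
    obtain ⟨x, hx1, hx2⟩ := ((ht.eventually_gt_atTop 0).and (eventually_gt_atTop (-B))).exists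
    exact ⟨-x, by linarith, by rw [he.neg_one_pow, one_mul, ← heval]; exact hx1⟩
  · have hlc : Q.leadingCoeff ≤ 0 := by rw [hQlc, ho.neg_one_pow]; norm_num
    have ht := Polynomial.tendsto_atBot_of_leadingCoeff_nonpos Q hQdeg hlc
    obtain ⟨x, hx1, hx2⟩ := ((ht.eventually_lt_atBot 0).and (eventually_gt_atTop (-B))).exists
    refine ⟨-x, by linarith, ?_⟩
    rw [ho.neg_one_pow, ← heval]
    nlinarith [hx1]

lemma aux_prod_roots {n : ℕ} {P : ℝ[X]} (hm : P.Monic) (hdeg : P.natDegree = n)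
    (lam : Fin n → ℝ) (hinj : Function.Injective lam)
    (hroot : ∀ i, P.eval (lam i) = 0) :
    P = ∏ i, (X - C (lam i)) := by
  set m : Multiset ℝ := Multiset.map lam Finset.univ.val with hmm
  have hnd : m.Nodup := Finset.univ.nodup.map hinj
  have hle : m ≤ P.roots := by
    rw [Multiset.le_iff_count]
    intro a
    by_cases ha : a ∈ m
    · have h1 : m.count a ≤ 1 := (Multiset.nodup_iff_count_le_one.1 hnd) a
      obtain ⟨i, _, hi⟩ := Multiset.mem_map.1 ha
      have har : a ∈ P.roots := by
        rw [Polynomial.mem_roots hm.ne_zero]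
        exact hi ▸ hroot i
      exact h1.trans (Multiset.count_pos.2 har)
    · simp [Multiset.count_eq_zero_of_notMem ha]
  have hcardm : Multiset.card m = n := by
    rw [hmm, Multiset.card_map]
    simp
  have hcards : Multiset.card P.roots ≤ n := hdeg ▸ P.card_roots'
  have hroots : P.roots = m :=
    (Multiset.eq_of_le_of_card_le hle (by rw [hcardm]; exact hcards)).symm
  have := Polynomial.prod_multiset_X_sub_C_of_monic_of_roots_card_eq hm
    (by rw [hroots, hcardm, hdeg])
  rw [← this, hroots, hmm, Multiset.map_map]
  rfl

/-- Spectrum of the relaxation matrix `S` of the diffusive approximation, with positive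
weights `μ_ℓ > 0` and increasing nodes `0 < θ_1 < … < θ_L`: `0` is a simple eigenvalue,
and the `L` remaining eigenvalues `λ_1, …, λ_L` are real, negative, and interlace the
nodes: `λ_L < -θ_L² < … < -θ_(ℓ+1)² < λ_ℓ < -θ_ℓ² < … < λ_1 < -θ_1² < 0`. -/
theorem relaxation_matrix_spectrum (α γα ε : ℝ) (L : ℕ)
    (hα0 : 0 < α) (hα1 : α < 1)
    (hγ : γα = 2 * Real.sin (Real.pi * α) / Real.pi) (hε : 0 < ε)
    (μ θ : Fin L → ℝ) (hμ : ∀ ℓ, 0 < μ ℓ) (hθ0 : ∀ ℓ, 0 < θ ℓ) (hθmono : StrictMono θ)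
    (S : Matrix (Fin (L + 1)) (Fin (L + 1)) ℝ)
    (hS : S = Matrix.of (Fin.cons
      (Fin.cons 0 (fun ℓ : Fin L => -(ε * μ ℓ)))
      (fun j : Fin L => Fin.cons 0 (fun ℓ : Fin L =>
        -((if j = ℓ then θ j ^ 2 else 0) + ε * γα * θ j ^ (2 * α - 1) * μ ℓ))))) :
    ∃ lam : Fin L → ℝ,
      S.charpoly = Polynomial.X * ∏ ℓ, (Polynomial.X - Polynomial.C (lam ℓ)) ∧
      (∀ i : Fin L, lam i < -θ i ^ 2) ∧
      (∀ i : Fin L, ∀ h : (i : ℕ) + 1 < L, -θ ⟨(i : ℕ) + 1, h⟩ ^ 2 < lam i) := by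
  -- positivity facts
  have hsin : 0 < Real.sin (Real.pi * α) :=
    Real.sin_pos_of_pos_of_lt_pi (mul_pos Real.pi_pos hα0)
      (mul_lt_of_lt_one_right Real.pi_pos hα1)
  have hγα : 0 < γα := by
    rw [hγ]; exact div_pos (mul_pos two_pos hsin) Real.pi_pos
  set u : Fin L → ℝ := fun i => ε * γα * θ i ^ (2 * α - 1) with hu_def
  have hu : ∀ i, 0 < u i := fun i =>
    mul_pos (mul_pos hε hγα) (Real.rpow_pos_of_pos (hθ0 i) _)
  -- the first column of S vanishes
  have h0 : ∀ i, S i 0 = 0 := by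
    intro i
    rw [hS]
    refine Fin.cases ?_ ?_ i <;> simp
  -- the lower-right minor
  set M : Matrix (Fin L) (Fin L) ℝ := S.submatrix Fin.succ Fin.succ with hM_def
  have hM : M = Matrix.of fun i j : Fin L =>
      -((if i = j then θ i ^ 2 else 0) + u i * μ j) := by
    ext i j
    rw [hM_def, Matrix.submatrix_apply, hS]
    simp [hu_def]
  -- the secular polynomial
  set P : ℝ[X] := ∏ i, (X + C (θ i ^ 2))
      + ∑ i, C (u i * μ i) * ∏ k ∈ univ.erase i, (X + C (θ k ^ 2)) with hP_def
  have hMP : M.charpoly = P := by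
    rw [hM, hP_def]
    exact aux_charpoly_rank_one (fun i => θ i ^ 2) u μ
  obtain ⟨hPm, hPd⟩ := aux_monic (fun i => θ i ^ 2) (fun i => u i * μ i)
  set f : ℝ → ℝ := fun x => P.eval x with hf_def
  have hfc : Continuous f := by
    rw [hf_def]; exact Polynomial.continuous P
  -- value of f at the nodes
  have hfval : ∀ j : Fin L, f (-θ j ^ 2)
      = (u j * μ j) * ∏ k ∈ univ.erase j, (θ k ^ 2 - θ j ^ 2) := by
    intro j
    have h1 : Polynomial.eval (-θ j ^ 2) (∏ i, (X + C (θ i ^ 2))) = 0 := by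
      rw [eval_prod]
      exact Finset.prod_eq_zero (Finset.mem_univ j) (by simp)
    have h2 : ∀ i ∈ univ.erase j,
        Polynomial.eval (-θ j ^ 2) (C (u i * μ i) * ∏ k ∈ univ.erase i, (X + C (θ k ^ 2))) = 0 := by
      intro i hi
      rw [eval_mul, eval_prod]
      have hji : j ∈ univ.erase i :=
        Finset.mem_erase.2 ⟨fun hc => (Finset.mem_erase.1 hi).1 (hc ▸ rfl), Finset.mem_univ j⟩
      rw [Finset.prod_eq_zero hji (by simp), mul_zero]
    rw [hf_def, hP_def]
    simp only [eval_add, h1, zero_add, eval_finset_sum]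
    rw [Finset.sum_eq_single_of_mem j (Finset.mem_univ j) (fun i _ hij => h2 i
      (Finset.mem_erase.2 ⟨hij, Finset.mem_univ i⟩))]
    rw [eval_mul, eval_C, eval_prod]
    congr 1
    apply Finset.prod_congr rfl
    intro k _
    simp; ring
  -- sign of f at the nodes
  have hsign : ∀ j : Fin L, 0 < (-1 : ℝ) ^ (j : ℕ) * f (-θ j ^ 2) := by
    intro j
    rw [hfval j, mul_left_comm]
    exact mul_pos (mul_pos (hu j) (hμ j)) (aux_sign θ hθ0 hθmono j)
  -- construction of the eigenvalues
  have key : ∀ i : Fin L, ∃ x : ℝ, f x = 0 ∧ x < -θ i ^ 2 ∧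
      (∀ h : (i : ℕ) + 1 < L, -θ ⟨(i : ℕ) + 1, h⟩ ^ 2 < x) := by
    intro i
    set p : ℝ := (-1 : ℝ) ^ (i : ℕ) with hp_def
    have hp2 : p * p = 1 := by
      rw [hp_def, ← mul_pow]; norm_num
    by_cases h : (i : ℕ) + 1 < L
    · set i' : Fin L := ⟨(i : ℕ) + 1, h⟩ with hi'_def
      set a : ℝ := -θ i' ^ 2 with ha_def
      set b : ℝ := -θ i ^ 2 with hb_def
      have hab : a < b := by
        have : θ i < θ i' := hθmono (by simp [hi'_def, Fin.lt_def])
        have := hθ0 i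
        rw [ha_def, hb_def]; nlinarith
      have h1 : 0 < p * f b := hsign i
      have h2 : 0 < (-p) * f a := by
        have h2' := hsign i'
        rw [← ha_def] at h2'
        have hpow : (-1 : ℝ) ^ ((i' : ℕ)) = -p := by
          show (-1 : ℝ) ^ ((i : ℕ) + 1) = -p
          rw [hp_def, pow_succ]; ring
        rw [hpow] at h2'
        exact h2'
      have hprod : f a * f b < 0 := by nlinarith
      obtain ⟨x, hx, hfx⟩ := aux_ivt hfc hab hprod
      exact ⟨x, hfx, hx.2, fun h' => hx.1⟩
    · have hL : (i : ℕ) + 1 = L := by omega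
      set b : ℝ := -θ i ^ 2 with hb_def
      obtain ⟨a, hab, ha⟩ := aux_exists_lower hPm hPd (by omega : 0 < L) b
      have h1 : 0 < p * f b := hsign i
      have h2 : 0 < (-p) * f a := by
        have hpow : (-1 : ℝ) ^ L = -p := by
          have h' : (-1 : ℝ) ^ L = (-1 : ℝ) ^ ((i : ℕ) + 1) := by rw [hL]
          rw [h', hp_def, pow_succ]; ring
        rw [← hpow]
        exact ha
      have hprod : f a * f b < 0 := by nlinarith
      obtain ⟨x, hx, hfx⟩ := aux_ivt hfc hab hprod
      exact ⟨x, hfx, hx.2, fun h' => absurd h' h⟩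
  choose lam hlam0 hlam1 hlam2 using key
  -- injectivity of lam
  have hanti : ∀ i j : Fin L, i < j → lam j < lam i := by
    intro i j hij
    have hij' : (i : ℕ) + 1 ≤ (j : ℕ) := hij
    have h : (i : ℕ) + 1 < L := lt_of_le_of_lt hij' j.isLt
    have h1 : lam j < -θ j ^ 2 := hlam1 j
    have h2 : -θ ⟨(i : ℕ) + 1, h⟩ ^ 2 < lam i := hlam2 i h
    have h3 : θ ⟨(i : ℕ) + 1, h⟩ ≤ θ j := by
      rcases eq_or_lt_of_le (show (⟨(i : ℕ) + 1, h⟩ : Fin L) ≤ j from hij') with he | hl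
      · rw [he]
      · exact (hθmono hl).le
    have h4 : -θ j ^ 2 ≤ -θ ⟨(i : ℕ) + 1, h⟩ ^ 2 := by
      have := hθ0 ⟨(i : ℕ) + 1, h⟩
      nlinarith
    linarith
  have hinj : Function.Injective lam := by
    intro i j hij
    rcases lt_trichotomy i j with hlt | he | hgt
    · exact absurd hij (ne_of_gt (hanti i j hlt))
    · exact he
    · exact absurd hij (ne_of_lt (hanti j i hgt))
  refine ⟨lam, ?_, hlam1, hlam2⟩
  rw [aux_charpoly_zero_col S h0, ← hM_def, hMP, hP_def,
    aux_prod_roots hPm hPd lam hinj hlam0]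
end

section
/- For all reals y > 0 and s > 0, ∫₀^∞ e^{-s t} · ( y / (2 √π t^{3/2}) ) · e^{-y²/(4t)} dt = e^{-y √s}. In other words, the function h_{1/2}(y, t) = y e^{-y²/(4t)} / (2 √π t^{3/2}) on t ∈ (0, ∞) has Laplace transform (in t) equal to exp(−y s^{1/2}). -/
open Real Set MeasureTheory

lemma glasser_image (b : ℝ) (hb : 0 < b) :
    (fun u : ℝ => u - b / u) '' Ioi 0 = univ := by
  ext c
  simp only [mem_image, mem_univ, iff_true, mem_Ioi]
  have hsq : Real.sqrt (c ^ 2 + 4 * b) ^ 2 = c ^ 2 + 4 * b :=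
    Real.sq_sqrt (by positivity)
  have habs : |c| < Real.sqrt (c ^ 2 + 4 * b) := by
    rw [← Real.sqrt_sq_eq_abs]
    exact Real.sqrt_lt_sqrt (sq_nonneg c) (by linarith)
  have hneg : -c ≤ |c| := neg_le_abs c
  refine ⟨(c + Real.sqrt (c ^ 2 + 4 * b)) / 2, by linarith, ?_⟩
  have hu : (0:ℝ) < (c + Real.sqrt (c ^ 2 + 4 * b)) / 2 := by linarith
  have hne : c + Real.sqrt (c ^ 2 + 4 * b) ≠ 0 := by
    intro h; rw [h] at hu; simp at hu
  field_simp
  nlinarith [hsq]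

lemma inv_image (b : ℝ) (hb : 0 < b) :
    (fun u : ℝ => b / u) '' Ioi 0 = Ioi 0 := by
  ext x
  simp only [mem_image, mem_Ioi]
  constructor
  · rintro ⟨u, hu, rfl⟩; exact div_pos hb hu
  · intro hx; exact ⟨b / x, div_pos hb hx, by field_simp⟩

lemma glasser_injOn (b : ℝ) (hb : 0 < b) :
    InjOn (fun u : ℝ => u - b / u) (Ioi 0) := by
  have : StrictMonoOn (fun u : ℝ => u - b / u) (Ioi 0) := by
    intro u hu v hv huv
    simp only
    have : b / v < b / u := by gcongr
    linarith
  exact this.injOn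

lemma glasser_integrable (b : ℝ) (hb : 0 < b) :
    IntegrableOn (fun u : ℝ => Real.exp (-(u - b / u) ^ 2)) (Ioi 0) := by
  have hcont : ContinuousOn (fun u : ℝ => Real.exp (-(u - b / u) ^ 2)) (Ioi 0) := by
    apply ContinuousOn.rexp
    apply ContinuousOn.neg
    apply ContinuousOn.pow
    exact continuousOn_id.sub (continuousOn_const.div continuousOn_id
      (fun x hx => ne_of_gt hx))
  have hg : IntegrableOn (fun u : ℝ => Real.exp (2 * b) * Real.exp (-u ^ 2)) (Ioi 0) := by
    apply Integrable.integrableOn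
    have := integrable_exp_neg_mul_sq (b := (1:ℝ)) one_pos
    simpa using this.const_mul (Real.exp (2 * b))
  refine Integrable.mono' hg (hcont.aestronglyMeasurable measurableSet_Ioi) ?_
  filter_upwards [ae_restrict_mem measurableSet_Ioi] with u hu
  have hune : u ≠ 0 := ne_of_gt hu
  rw [Real.norm_eq_abs, abs_of_pos (Real.exp_pos _), ← Real.exp_add]
  apply Real.exp_le_exp.2
  have h1 : (u - b / u) ^ 2 = u ^ 2 - 2 * b + (b / u) ^ 2 := by
    field_simp; ring
  nlinarith [sq_nonneg (b / u)]

lemma glasser_deriv (b u : ℝ) (hu : u ∈ Ioi (0:ℝ)) :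
    HasDerivWithinAt (fun u : ℝ => u - b / u) (1 + b / u ^ 2) (Ioi 0) u := by
  have hne : u ≠ 0 := ne_of_gt hu
  have h : HasDerivAt (fun u : ℝ => u - b * u⁻¹) (1 - b * (-(u ^ 2)⁻¹)) u :=
    (hasDerivAt_id u).sub ((hasDerivAt_inv hne).const_mul b)
  have heq : (fun u : ℝ => u - b / u) = fun u : ℝ => u - b * u⁻¹ := by
    funext v; rw [div_eq_mul_inv]
  have heq2 : 1 + b / u ^ 2 = 1 - b * (-(u ^ 2)⁻¹) := by
    rw [div_eq_mul_inv]; ring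
  rw [heq, heq2]; exact h.hasDerivWithinAt

lemma inv_deriv (b u : ℝ) (hu : u ∈ Ioi (0:ℝ)) :
    HasDerivWithinAt (fun u : ℝ => b / u) (-(b / u ^ 2)) (Ioi 0) u := by
  have hne : u ≠ 0 := ne_of_gt hu
  have h : HasDerivAt (fun u : ℝ => b * u⁻¹) (b * (-(u ^ 2)⁻¹)) u :=
    (hasDerivAt_inv hne).const_mul b
  have heq : (fun u : ℝ => b / u) = fun u : ℝ => b * u⁻¹ := by
    funext v; rw [div_eq_mul_inv]
  have heq2 : -(b / u ^ 2) = b * (-(u ^ 2)⁻¹) := by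
    rw [div_eq_mul_inv]; ring
  rw [heq, heq2]; exact h.hasDerivWithinAt

lemma inv_injOn (b : ℝ) (hb : 0 < b) : InjOn (fun u : ℝ => b / u) (Ioi 0) := by
  intro u hu v hv h
  simp only at h
  field_simp [ne_of_gt (mem_Ioi.1 hu), ne_of_gt (mem_Ioi.1 hv)] at h
  exact h.symm

lemma glasser (b : ℝ) (hb : 0 < b) :
    ∫ u in Ioi (0:ℝ), Real.exp (-(u - b / u) ^ 2) = Real.sqrt π / 2 := by
  set J := ∫ u in Ioi (0:ℝ), Real.exp (-(u - b / u) ^ 2) with hJ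
  -- second integral equals J by substitution u ↦ b / u
  have hsub : J = ∫ u in Ioi (0:ℝ), b / u ^ 2 * Real.exp (-(u - b / u) ^ 2) := by
    conv_lhs => rw [hJ, ← inv_image b hb]
    rw [integral_image_eq_integral_abs_deriv_smul measurableSet_Ioi (inv_deriv b)
      (inv_injOn b hb)]
    apply setIntegral_congr_fun measurableSet_Ioi
    intro u hu
    have hune : (u:ℝ) ≠ 0 := ne_of_gt hu
    have h2 : b / u - b / (b / u) = -(u - b / u) := by
      have : b / (b / u) = u := by field_simp
      rw [this]; ring
    show |(-(b / u ^ 2))| • Real.exp (-(b / u - b / (b / u)) ^ 2)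
        = b / u ^ 2 * Real.exp (-(u - b / u) ^ 2)
    rw [smul_eq_mul, abs_neg, abs_of_pos (show (0:ℝ) < b / u ^ 2 by positivity),
      h2, neg_sq]
  -- second integrand is integrable
  have hint2 : IntegrableOn (fun u : ℝ => b / u ^ 2 * Real.exp (-(u - b / u) ^ 2))
      (Ioi 0) := by
    have := (integrableOn_image_iff_integrableOn_abs_deriv_smul measurableSet_Ioi
      (inv_deriv b) (inv_injOn b hb)
      (fun u : ℝ => Real.exp (-(u - b / u) ^ 2))).1
      (by rw [inv_image b hb]; exact glasser_integrable b hb)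
    apply this.congr_fun ?_ measurableSet_Ioi
    intro u hu
    have hune : (u:ℝ) ≠ 0 := ne_of_gt hu
    have h2 : b / u - b / (b / u) = -(u - b / u) := by
      have : b / (b / u) = u := by field_simp
      rw [this]; ring
    show |(-(b / u ^ 2))| • Real.exp (-(b / u - b / (b / u)) ^ 2)
        = b / u ^ 2 * Real.exp (-(u - b / u) ^ 2)
    rw [smul_eq_mul, abs_neg, abs_of_pos (show (0:ℝ) < b / u ^ 2 by positivity),
      h2, neg_sq]
  -- total: gaussian over ℝ
  have hgauss : ∫ x : ℝ, Real.exp (-x ^ 2) = Real.sqrt π := by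
    have := integral_gaussian 1
    simpa using this
  have htot : Real.sqrt π = J + J := by
    rw [← hgauss, ← setIntegral_univ (f := fun x : ℝ => Real.exp (-x ^ 2)),
      ← glasser_image b hb,
      integral_image_eq_integral_abs_deriv_smul measurableSet_Ioi (glasser_deriv b)
        (glasser_injOn b hb)]
    have : ∀ u ∈ Ioi (0:ℝ), |1 + b / u ^ 2| • Real.exp (-(u - b / u) ^ 2)
        = Real.exp (-(u - b / u) ^ 2) + b / u ^ 2 * Real.exp (-(u - b / u) ^ 2) := by
      intro u hu
      have : (0:ℝ) < 1 + b / u ^ 2 := by positivity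
      rw [smul_eq_mul, abs_of_pos this]; ring
    rw [setIntegral_congr_fun measurableSet_Ioi this,
      integral_add (glasser_integrable b hb) hint2, ← hsub]
  linarith

lemma glasser' (b : ℝ) (hb : 0 < b) :
    ∫ u in Ioi (0:ℝ), Real.exp (-(u ^ 2 + b ^ 2 / u ^ 2))
      = Real.sqrt π / 2 * Real.exp (-2 * b) := by
  have heq : ∀ u ∈ Ioi (0:ℝ), Real.exp (-(u ^ 2 + b ^ 2 / u ^ 2))
      = Real.exp (-2 * b) * Real.exp (-(u - b / u) ^ 2) := by
    intro u hu
    rw [← Real.exp_add]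
    congr 1
    have hune : u ≠ 0 := ne_of_gt hu
    field_simp
    ring
  rw [setIntegral_congr_fun measurableSet_Ioi heq, integral_const_mul, glasser b hb]
  ring

lemma main_image (y : ℝ) (hy : 0 < y) :
    (fun u : ℝ => y ^ 2 / (4 * u ^ 2)) '' Ioi 0 = Ioi 0 := by
  ext x
  simp only [mem_image, mem_Ioi]
  constructor
  · rintro ⟨u, hu, rfl⟩; positivity
  · intro hx
    refine ⟨y / (2 * Real.sqrt x), by positivity, ?_⟩
    have hsx : Real.sqrt x ^ 2 = x := Real.sq_sqrt hx.le
    have hsxne : Real.sqrt x ≠ 0 := ne_of_gt (Real.sqrt_pos.2 hx)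
    field_simp
    nlinarith [hsx]

lemma main_injOn (y : ℝ) (hy : 0 < y) :
    InjOn (fun u : ℝ => y ^ 2 / (4 * u ^ 2)) (Ioi 0) := by
  have : StrictAntiOn (fun u : ℝ => y ^ 2 / (4 * u ^ 2)) (Ioi 0) := by
    intro u hu v hv huv
    have hupos : (0:ℝ) < u := hu
    simp only
    gcongr
  exact this.injOn

lemma main_deriv (y : ℝ) (hy : 0 < y) (u : ℝ) (hu : u ∈ Ioi (0:ℝ)) :
    HasDerivWithinAt (fun u : ℝ => y ^ 2 / (4 * u ^ 2)) (-(y ^ 2 / (2 * u ^ 3)))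
      (Ioi 0) u := by
  have hune : u ≠ 0 := ne_of_gt hu
  have hd : HasDerivAt (fun u : ℝ => 4 * u ^ 2) (4 * (2 * u ^ 1)) u := by
    simpa using (hasDerivAt_pow 2 u).const_mul 4
  have h : HasDerivAt (fun u : ℝ => y ^ 2 / (4 * u ^ 2))
      ((0 * (4 * u ^ 2) - y ^ 2 * (4 * (2 * u ^ 1))) / (4 * u ^ 2) ^ 2) u :=
    (hasDerivAt_const u (y ^ 2)).div hd (by positivity)
  have heq : -(y ^ 2 / (2 * u ^ 3))
      = (0 * (4 * u ^ 2) - y ^ 2 * (4 * (2 * u ^ 1))) / (4 * u ^ 2) ^ 2 := by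
    field_simp
    ring
  rw [heq]
  exact h.hasDerivWithinAt


/-- Laplace-transform identity behind the closed-form solution for `α = 1/2`: for
`y > 0` and `s > 0`,
`∫₀^∞ e^(-s t) · (y / (2 √π t^(3/2))) · e^(-y²/(4t)) dt = e^(-y √s)`. -/
theorem laplace_transform_levy_kernel (y s : ℝ) (hy : 0 < y) (hs : 0 < s) :
    ∫ t in Set.Ioi (0 : ℝ),
        Real.exp (-s * t) * (y / (2 * Real.sqrt Real.pi * t ^ ((3 : ℝ) / 2))) *
          Real.exp (-y ^ 2 / (4 * t)) =
      Real.exp (-y * Real.sqrt s) := by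
  have hsqs : 0 < Real.sqrt s := Real.sqrt_pos.2 hs
  have hsqpi : 0 < Real.sqrt π := Real.sqrt_pos.2 Real.pi_pos
  set b := y * Real.sqrt s / 2 with hbdef
  have hb : 0 < b := by positivity
  have hb2 : b ^ 2 = y ^ 2 * s / 4 := by
    rw [hbdef, div_pow, mul_pow, Real.sq_sqrt hs.le]; ring
  conv_lhs => rw [← main_image y hy]
  rw [integral_image_eq_integral_abs_deriv_smul measurableSet_Ioi (main_deriv y hy)
    (main_injOn y hy)]
  have hcongr : ∀ u ∈ Ioi (0:ℝ),
      |(-(y ^ 2 / (2 * u ^ 3)))| •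
        (Real.exp (-s * (y ^ 2 / (4 * u ^ 2))) *
          (y / (2 * Real.sqrt π * (y ^ 2 / (4 * u ^ 2)) ^ ((3:ℝ)/2))) *
          Real.exp (-y ^ 2 / (4 * (y ^ 2 / (4 * u ^ 2)))))
      = 2 / Real.sqrt π * Real.exp (-(u ^ 2 + b ^ 2 / u ^ 2)) := by
    intro u hu
    have hupos : (0:ℝ) < u := hu
    have hune : u ≠ 0 := ne_of_gt hu
    have ha : (0:ℝ) < y / (2 * u) := by positivity
    have ht32 : (y ^ 2 / (4 * u ^ 2)) ^ ((3:ℝ)/2) = y ^ 3 / (8 * u ^ 3) := by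
      have h1 : y ^ 2 / (4 * u ^ 2) = (y / (2 * u)) ^ 2 := by
        field_simp; ring
      rw [h1, ← Real.rpow_natCast (y / (2 * u)) 2, ← Real.rpow_mul ha.le,
        show ((2:ℕ):ℝ) * ((3:ℝ)/2) = ((3:ℕ):ℝ) from by norm_num,
        Real.rpow_natCast, div_pow]
      congr 1
      ring
    have hexp2 : -y ^ 2 / (4 * (y ^ 2 / (4 * u ^ 2))) = -u ^ 2 := by
      field_simp
    have hExp : Real.exp (-s * (y ^ 2 / (4 * u ^ 2))) * Real.exp (-u ^ 2)
        = Real.exp (-(u ^ 2 + b ^ 2 / u ^ 2)) := by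
      rw [← Real.exp_add]
      congr 1
      rw [hb2]
      field_simp
      ring
    rw [smul_eq_mul, abs_neg, abs_of_pos (show (0:ℝ) < y ^ 2 / (2 * u ^ 3) by positivity),
      ht32, hexp2]
    rw [show y ^ 2 / (2 * u ^ 3) *
        (Real.exp (-s * (y ^ 2 / (4 * u ^ 2))) * (y / (2 * Real.sqrt π * (y ^ 3 / (8 * u ^ 3)))) *
          Real.exp (-u ^ 2))
      = (y ^ 2 / (2 * u ^ 3) * (y / (2 * Real.sqrt π * (y ^ 3 / (8 * u ^ 3))))) *
          (Real.exp (-s * (y ^ 2 / (4 * u ^ 2))) * Real.exp (-u ^ 2)) from by ring]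
    rw [hExp]
    congr 1
    field_simp
    ring
  rw [setIntegral_congr_fun measurableSet_Ioi hcongr, integral_const_mul, glasser' b hb]
  rw [show -2 * b = -y * Real.sqrt s from by rw [hbdef]; ring]
  field_simp
end
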